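/- arXiv:math/0701303 — 2 statements merged into one kernel-verified Lean document; each statement's English description precedes it below -/
import Mathlib

section
/- Let ρ ≥ 1 satisfy ρ = |F| + √(F² − 1) for some real F with |F| ≥ 1. If F = F(λ) with F(λ) = 1 + F′(λ*)(λ − λ*) + O((λ−λ*)²) near a point λ* where F(λ*) = 1 (or F(λ*) = −1, with appropriate signs), then (ln ρ(λ))² = 2|F′(λ*)| |λ − λ*| + O(|λ − λ*|^{3/2}) as λ → λ*. -/
open Filter Topology Asymptotics

set_option maxHeartbeats 1000000 in
private lemma key8 (u : ℝ) (hu0 : 0 < u) (hu : u ≤ 1/8) :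
    |(Real.log (1 + u + Real.sqrt (u^2 + 2*u)))^2 - 2*u| ≤ 54 * (u * Real.sqrt u) := by
  have hru : 0 ≤ Real.sqrt u := Real.sqrt_nonneg _
  have hru2 : (Real.sqrt u)^2 = u := Real.sq_sqrt hu0.le
  have huru : u ≤ Real.sqrt u := by nlinarith
  obtain ⟨s, hsdef, hs0, hsq⟩ : ∃ s, Real.sqrt (u^2 + 2*u) = s ∧ 0 ≤ s ∧ s^2 = u^2 + 2*u :=
    ⟨_, rfl, Real.sqrt_nonneg _, Real.sq_sqrt (by nlinarith)⟩
  rw [hsdef]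
  have hsu : s ≤ 2 * Real.sqrt u := by nlinarith
  set y := u + s with hy
  have hy0 : 0 ≤ y := by positivity
  have hy1 : y ≤ 1 := by
    have hru8 : Real.sqrt u ≤ Real.sqrt (1/8) := Real.sqrt_le_sqrt hu
    have h716 : Real.sqrt (1/8) ≤ 7/16 := by
      nlinarith [Real.sq_sqrt (show (0:ℝ) ≤ 1/8 by norm_num), Real.sqrt_nonneg (1/8:ℝ)]
    nlinarith
  have h1y : (0:ℝ) < 1 + y := by linarith
  obtain ⟨t, htdef, htu, htl⟩ : ∃ t, Real.log (1 + y) = t ∧ t ≤ y ∧ y - y^2 ≤ t := by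
    refine ⟨_, rfl, ?_, ?_⟩
    · have := Real.log_le_sub_one_of_pos h1y
      linarith
    · rw [Real.le_log_iff_exp_le h1y]
      have h1 := Real.add_one_le_exp (-(y - y^2))
      have hE : Real.exp (y - y^2) * Real.exp (-(y - y^2)) = 1 := by
        rw [← Real.exp_add]; simp
      nlinarith [Real.exp_pos (y - y^2), Real.exp_pos (-(y - y^2))]
  rw [show 1 + u + s = 1 + y by rw [hy]; ring, htdef]
  have ht0 : 0 ≤ t := by nlinarith
  have hyl : y ≤ 3 * Real.sqrt u := by nlinarith
  have hysq : y^2 = 2*u + 2*u^2 + 2*(u*s) := by rw [hy]; nlinarith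
  have hup : t^2 ≤ y^2 := by nlinarith
  have hlow : (y - y^2)^2 ≤ t^2 := by
    nlinarith [mul_nonneg (sub_nonneg.2 htl) (by nlinarith : (0:ℝ) ≤ t + (y - y^2))]
  have hr3 : (3*Real.sqrt u)^3 = 27*(u*Real.sqrt u) := by
    linear_combination (27*Real.sqrt u) * hru2
  have hy3 : y^3 ≤ 27 * (u * Real.sqrt u) := by
    have h3 := pow_le_pow_left₀ hy0 hyl 3
    rw [hr3] at h3; exact h3
  have hub : t^2 - 2*u ≤ 6 * (u * Real.sqrt u) := by
    have h1 : t^2 - 2*u ≤ 2*u^2 + 2*(u*s) := by nlinarith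
    have h2 : u*u ≤ u * Real.sqrt u := mul_le_mul_of_nonneg_left huru hu0.le
    have h3 : u*s ≤ u * (2*Real.sqrt u) := mul_le_mul_of_nonneg_left hsu hu0.le
    nlinarith
  have hlb : -(54 * (u * Real.sqrt u)) ≤ t^2 - 2*u := by
    have h1 : y^2 - 2*y^3 ≤ t^2 := by nlinarith [sq_nonneg (y^2), pow_le_pow_left₀ hy0 hy1 4]
    nlinarith [mul_nonneg hu0.le hs0, sq_nonneg u]
  rw [abs_le]
  constructor <;> linarith

private lemma taylor8 (F : ℝ → ℝ) (l : ℝ) (hF : AnalyticAt ℝ F l) :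
    (fun lam => F lam - F l - deriv F l * (lam - l)) =O[𝓝 l] fun lam => (lam - l)^2 := by
  obtain ⟨p, hp⟩ := hF
  have h2 := hp.isBigO_sub_partialSum_pow 2
  have hps : ∀ y : ℝ, p.partialSum 2 y = F l + deriv F l * y := by
    intro y
    have hc0 : p.coeff 0 = F l := hp.coeff_zero _
    have hc1 : p.coeff 1 = deriv F l := by rw [hp.deriv]; rfl
    simp [FormalMultilinearSeries.partialSum, Finset.sum_range_succ, hc0, hc1]
    ring
  have h2' : (fun y : ℝ => F (l + y) - F l - deriv F l * y) =O[𝓝 0] fun y : ℝ => |y|^2 := by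
    have := h2
    simp only [hps, Real.norm_eq_abs] at this
    simpa [sub_sub] using this
  have hc : Filter.Tendsto (fun lam : ℝ => lam - l) (𝓝 l) (𝓝 0) := by
    exact (continuous_id.sub continuous_const).tendsto' l 0 (by simp)
  have hco := h2'.comp_tendsto hc
  have heq : ∀ lam : ℝ, l + (lam - l) = lam := fun lam => by ring
  simpa only [Function.comp_def, heq, sq_abs] using hco

private lemma sign_est8 (u s E C A : ℝ) (hus : u = s + E) (hu0 : 0 < u)
    (hE : |E| ≤ C * A) (hA : 0 ≤ A) : |u - abs s| ≤ 3 * C * A := by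
  have hE' := abs_le.mp hE
  have hCA : 0 ≤ C * A := le_trans (abs_nonneg _) hE
  rcases abs_cases s with ⟨h, _⟩ | ⟨h, _⟩ <;> rw [abs_le] <;> constructor <;> nlinarith

private lemma rpow32 (A : ℝ) (hA : 0 ≤ A) : A ^ (3/2 : ℝ) = A * Real.sqrt A := by
  rw [show (3/2:ℝ) = 3 * (1/2) by norm_num, Real.rpow_mul hA, ← Real.sqrt_eq_rpow,
      show ((3:ℝ)) = ((3:ℕ):ℝ) by norm_num, Real.rpow_natCast,
      pow_succ, Real.sqrt_mul (sq_nonneg A), Real.sqrt_sq hA]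

set_option maxHeartbeats 2000000 in
/-- For the multiplicator `ρ(λ) = |F(λ)| + √(F(λ)² - 1)` of the Hill operator,
with `F` real-analytic near a band edge `λ*` where `|F(λ*)| = 1` and `F'(λ*) ≠ 0`,
one has `(ln ρ(λ))² = 2 |F'(λ*)| |λ - λ*| + O(|λ - λ*|^{3/2})` as `λ → λ*`
through the regular points (where `|F(λ)| > 1`). -/
theorem stmt8 (F : ℝ → ℝ) (l : ℝ) (hF : AnalyticAt ℝ F l) (hFl : |F l| = 1)
    (hd : deriv F l ≠ 0) :
    (fun lam => (Real.log (|F lam| + Real.sqrt (F lam ^ 2 - 1))) ^ 2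
        - 2 * |deriv F l| * |lam - l|)
      =O[𝓝[{x : ℝ | 1 < |F x|}] l] (fun lam => |lam - l| ^ (3 / 2 : ℝ)) := by
  set d := deriv F l with hdd
  obtain ⟨C, hC0, hCw⟩ := (taylor8 F l hF).exists_pos
  have hTb : ∀ᶠ lam in 𝓝 l, |F lam - F l - d * (lam - l)| ≤ C * (lam - l)^2 := by
    have := hCw.bound
    filter_upwards [this] with lam h
    simpa [Real.norm_eq_abs, abs_of_nonneg (sq_nonneg (lam - l))] using h
  have hcont : ∀ᶠ lam in 𝓝 l, |F lam - F l| ≤ 1/16 := by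
    have h := hF.continuousAt.tendsto (Metric.closedBall_mem_nhds (F l) (by norm_num : (0:ℝ) < 1/16))
    filter_upwards [h] with lam hlam
    simpa [Real.dist_eq] using hlam
  have hone : ∀ᶠ lam in 𝓝 l, |lam - l| ≤ 1 := by
    filter_upwards [Metric.closedBall_mem_nhds l one_pos] with lam hlam
    simpa [Real.dist_eq] using hlam
  set M := |d| + 3 * C with hM
  have hM0 : 0 < M := by positivity
  rw [Asymptotics.isBigO_iff]
  refine ⟨54 * (M * Real.sqrt M) + 6 * C, ?_⟩
  filter_upwards [hTb.filter_mono nhdsWithin_le_nhds, hcont.filter_mono nhdsWithin_le_nhds,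
    hone.filter_mono nhdsWithin_le_nhds, self_mem_nhdsWithin] with lam hT hc hA1 hmem
  have h1F : 1 < |F lam| := hmem
  set u := |F lam| - 1 with hu
  have hu0 : 0 < u := by simp [hu]; linarith
  have hu8 : u ≤ 1/8 := by
    have := abs_sub_abs_le_abs_sub (F lam) (F l)
    rw [hFl] at this
    simp only [hu]
    linarith
  have habs : |F lam| = 1 + u := by rw [hu]; ring
  have hFsq : F lam ^ 2 - 1 = u^2 + 2*u := by
    rw [← sq_abs, habs]; ring
  set A := |lam - l| with hAdef
  have hA0 : 0 ≤ A := abs_nonneg _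
  have hA2 : (lam - l)^2 = A^2 := (sq_abs _).symm
  -- establish |u - |d| * A| ≤ 3 C A²
  have husd : |u - |d| * A| ≤ 3 * C * A^2 := by
    have hc' := abs_le.mp hc
    rcases abs_eq (by norm_num : (0:ℝ) ≤ 1) |>.mp hFl with hone' | hmone
    · -- F l = 1, F lam > 0
      have hpos : 0 < F lam := by rw [hone'] at hc'; linarith [abs_le.mp hc |>.1]
      have hueq : u = d * (lam - l) + (F lam - F l - d * (lam - l)) := by
        rw [hu, abs_of_pos hpos, hone']; ring
      have := sign_est8 u (d * (lam - l)) _ C (A^2) hueq hu0 (by rwa [hA2] at hT) (by positivity)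
      rwa [abs_mul, ← hAdef] at this
    · -- F l = -1, F lam < 0
      have hneg : F lam < 0 := by rw [hmone] at hc'; linarith
      have hueq : u = (-d) * (lam - l) + (-(F lam - F l - d * (lam - l))) := by
        rw [hu, abs_of_neg hneg, hmone]; ring
      have hT' : |-(F lam - F l - d * (lam - l))| ≤ C * A^2 := by
        rw [abs_neg]; rwa [hA2] at hT
      have := sign_est8 u ((-d) * (lam - l)) _ C (A^2) hueq hu0 hT' (by positivity)
      rwa [abs_mul, abs_neg, ← hAdef] at this
  have hkey := key8 u hu0 hu8
  -- u ≤ M * A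
  have huMA : u ≤ M * A := by
    have h1 := abs_le.mp husd |>.2
    have hAA : A^2 ≤ A := by nlinarith
    rw [hM]
    nlinarith
  have hsM : 0 ≤ Real.sqrt M := Real.sqrt_nonneg _
  have hsA : 0 ≤ Real.sqrt A := Real.sqrt_nonneg _
  have hsqu : Real.sqrt u ≤ Real.sqrt M * Real.sqrt A := by
    rw [← Real.sqrt_mul hM0.le]
    exact Real.sqrt_le_sqrt huMA
  have huu : u * Real.sqrt u ≤ (M * Real.sqrt M) * (A * Real.sqrt A) := by
    have h := mul_le_mul huMA hsqu (Real.sqrt_nonneg u) (by positivity)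
    nlinarith
  have hA2le : A^2 ≤ A * Real.sqrt A := by
    have hAs : A ≤ Real.sqrt A := by
      nlinarith [Real.sq_sqrt hA0, Real.sqrt_nonneg A]
    nlinarith
  set t := Real.log (1 + u + Real.sqrt (u^2 + 2*u)) with htdef
  have hmain : |t^2 - 2 * |d| * A| ≤ (54 * (M * Real.sqrt M) + 6 * C) * (A * Real.sqrt A) := by
    have heq : t^2 - 2 * |d| * A = (t^2 - 2*u) + 2*(u - |d| * A) := by ring
    rw [heq]
    refine le_trans (abs_add_le _ _) ?_
    have habs2 : |2*(u - |d| * A)| = 2 * |u - |d| * A| := by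
      rw [abs_mul]; norm_num
    rw [habs2]
    have h6 : 2 * |u - |d| * A| ≤ 6 * C * (A * Real.sqrt A) := by
      have h := mul_le_mul_of_nonneg_left hA2le (by positivity : (0:ℝ) ≤ 6*C)
      nlinarith [husd]
    nlinarith [hkey, huu]
  rw [Real.norm_eq_abs, Real.norm_eq_abs, rpow32 A hA0, habs, hFsq, ← htdef,
    abs_of_nonneg (by positivity : (0:ℝ) ≤ A * Real.sqrt A)]
  exact hmain
end

section
/- If F : ℝ → ℝ is continuous at λ* with |F(λ*)| = 1 and differentiable at λ*, and ρ(λ) = |F(λ)| + √(max(F(λ)² − 1, 0)), then ρ(λ) = 1 + √(2|F′(λ*)||λ − λ*|) + O(|λ − λ*|) as λ → λ* along points where |F(λ)| > 1, assuming F is C² near λ*. -/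
open Filter Topology Asymptotics

set_option maxHeartbeats 1000000

private lemma sqrt_add_le' (a b : ℝ) (ha : 0 ≤ a) (hb : 0 ≤ b) :
    Real.sqrt (a + b) ≤ Real.sqrt a + Real.sqrt b := by
  have h : a + b ≤ (Real.sqrt a + Real.sqrt b) ^ 2 := by
    rw [add_sq, Real.sq_sqrt ha, Real.sq_sqrt hb]
    nlinarith [Real.sqrt_nonneg a, Real.sqrt_nonneg b]
  calc Real.sqrt (a + b) ≤ Real.sqrt ((Real.sqrt a + Real.sqrt b) ^ 2) := Real.sqrt_le_sqrt h
    _ = Real.sqrt a + Real.sqrt b := Real.sqrt_sq (by positivity)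

private lemma abs_sqrt_sub_sqrt_le (a b : ℝ) (ha : 0 ≤ a) (hb : 0 ≤ b) :
    |Real.sqrt a - Real.sqrt b| ≤ Real.sqrt |a - b| := by
  rcases le_total b a with h | h
  · rw [abs_of_nonneg (by simp [Real.sqrt_le_sqrt h] : (0:ℝ) ≤ _), abs_of_nonneg (by linarith)]
    have := sqrt_add_le' b (a - b) hb (by linarith)
    rw [add_sub_cancel] at this
    linarith
  · rw [abs_of_nonpos (by simp [Real.sqrt_le_sqrt h, sub_nonpos] : _ ≤ (0:ℝ)),
      abs_of_nonpos (by linarith)]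
    have := sqrt_add_le' a (b - a) ha (by linarith)
    rw [add_sub_cancel] at this
    rw [neg_sub, neg_sub]
    linarith

private lemma taylor2 {F : ℝ → ℝ} {l : ℝ} (hF : ContDiffAt ℝ 2 F l) :
    ∃ C, 0 < C ∧ ∀ᶠ x in 𝓝 l, |F x - F l - deriv F l * (x - l)| ≤ C * (x - l) ^ 2 := by
  have hfd : DifferentiableAt ℝ (fderiv ℝ F) l :=
    (hF.fderiv_right (m := 1) (by norm_num)).differentiableAt (by norm_num)
  have hd : DifferentiableAt ℝ (deriv F) l := by
    have : DifferentiableAt ℝ (fun x => fderiv ℝ F x 1) l :=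
      hfd.clm_apply (differentiableAt_const 1)
    simpa [fderiv_apply_one_eq_deriv] using this
  have hO : (fun x => deriv F x - deriv F l) =O[𝓝 l] fun x => x - l :=
    hd.isBigO_sub
  rcases hO.exists_pos with ⟨C, hC, hbound⟩
  rw [Asymptotics.isBigOWith_iff] at hbound
  have hdiff : ∀ᶠ y in 𝓝 l, DifferentiableAt ℝ F y :=
    (hF.eventually (by norm_num)).mono fun y hy => hy.differentiableAt (by norm_num)
  rcases Metric.eventually_nhds_iff_ball.1 (hbound.and hdiff) with ⟨r, hr, hball⟩
  refine ⟨C, hC, Metric.eventually_nhds_iff_ball.2 ⟨r, hr, fun x hx => ?_⟩⟩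
  set c := deriv F l
  set g : ℝ → ℝ := fun t => F t - c * t with hg
  have hseg : segment ℝ l x ⊆ Metric.ball l r :=
    (convex_ball l r).segment_subset (Metric.mem_ball_self hr) hx
  have hsegcb : segment ℝ l x ⊆ Metric.closedBall l |x - l| := by
    apply (convex_closedBall l |x - l|).segment_subset
    · simp [Metric.mem_closedBall, dist_self, abs_nonneg]
    · simp [Metric.mem_closedBall, Real.dist_eq, le_refl]
  have hbnd : ∀ t ∈ segment ℝ l x, ‖deriv F t - c‖ ≤ C * |x - l| := by
    intro t ht
    have h1 : ‖deriv F t - c‖ ≤ C * ‖t - l‖ := (hball t (hseg ht)).1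
    have h2 : |t - l| ≤ |x - l| := by
      have := hsegcb ht
      simpa [Metric.mem_closedBall, Real.dist_eq] using this
    calc ‖deriv F t - c‖ ≤ C * ‖t - l‖ := h1
      _ ≤ C * |x - l| := by
          rw [Real.norm_eq_abs]; exact mul_le_mul_of_nonneg_left h2 hC.le
  have key : ‖g x - g l‖ ≤ C * |x - l| * ‖x - l‖ :=
    Convex.norm_image_sub_le_of_norm_hasDerivWithin_le
      (f' := fun t => deriv F t - c)
      (fun t ht => by
        have hder : HasDerivAt g (deriv F t - c) t := by
          have := (hball t (hseg ht)).2.hasDerivAt.sub ((hasDerivAt_id t).const_mul c)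
          rw [mul_one] at this; exact this
        exact hder.hasDerivWithinAt)
      hbnd (convex_segment l x) (left_mem_segment ℝ l x) (right_mem_segment ℝ l x)
  have heq2 : g x - g l = F x - F l - c * (x - l) := by simp only [hg]; ring
  rw [heq2, Real.norm_eq_abs, Real.norm_eq_abs] at key
  calc |F x - F l - c * (x - l)| ≤ C * |x - l| * |x - l| := key
    _ = C * (x - l) ^ 2 := by rw [mul_assoc, abs_mul_abs_self]; ring

/-- If `F` is `C²` near `λ*` with `|F(λ*)| = 1`, and
`ρ(λ) = |F(λ)| + √(max(F(λ)² - 1, 0))`, then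
`ρ(λ) = 1 + √(2 |F'(λ*)| |λ - λ*|) + O(|λ - λ*|)` as `λ → λ*`
through points where `|F(λ)| > 1`. -/
theorem stmt16 (F : ℝ → ℝ) (l : ℝ) (hF : ContDiffAt ℝ 2 F l) (hFl : |F l| = 1) :
    (fun lam => (|F lam| + Real.sqrt (max (F lam ^ 2 - 1) 0))
        - 1 - Real.sqrt (2 * |deriv F l| * |lam - l|))
      =O[𝓝[{x : ℝ | 1 < |F x|}] l] (fun lam => |lam - l|) := by
  obtain ⟨C, hC, hTay⟩ := taylor2 hF
  set d := deriv F l with hd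
  set K : ℝ := 2 * (|d| + C) + Real.sqrt (2 * C) + C + Real.sqrt (C ^ 2 + 2 * C)
    + Real.sqrt (2 * C) with hK
  rw [Asymptotics.isBigO_iff]
  refine ⟨K, ?_⟩
  have hcont : ∀ᶠ x in 𝓝 l, |F x - F l| < 1 := by
    have := hF.continuousAt
    have h := Metric.tendsto_nhds.1 this.tendsto 1 one_pos
    simpa [Real.dist_eq] using h
  have hsmall : ∀ᶠ x in 𝓝 l, |x - l| ≤ 1 := by
    have : ∀ᶠ x in 𝓝 l, dist x l < 1 := Metric.eventually_nhds_iff.2 ⟨1, one_pos, fun _ h => h⟩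
    exact this.mono fun x hx => by rw [← Real.dist_eq]; exact hx.le
  have hmem : ∀ᶠ x in 𝓝[{x : ℝ | 1 < |F x|}] l, 1 < |F x| := eventually_mem_nhdsWithin
  filter_upwards [hmem, (hTay.and (hcont.and hsmall)).filter_mono nhdsWithin_le_nhds]
    with x hS hrest
  obtain ⟨hT, hc, hsm⟩ := hrest
  set h : ℝ := |x - l| with hh
  have hh0 : 0 ≤ h := abs_nonneg _
  -- sign analysis
  have hsgn : |F x| = F l * F x := by
    rcases (abs_eq (by norm_num : (0:ℝ) ≤ 1)).1 hFl with h1 | h1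
    · have : 0 < F x := by
        have := abs_lt.1 hc; linarith [this.1]
      rw [h1, one_mul, abs_of_pos this]
    · have : F x < 0 := by
        have := abs_lt.1 hc; linarith [this.2]
      rw [h1, abs_of_neg this]; ring
  set u : ℝ := |F x| - 1 with hu
  have hupos : 0 < u := by rw [hu]; linarith
  have hFl2 : F l * F l = 1 := by
    rcases (abs_eq (by norm_num : (0:ℝ) ≤ 1)).1 hFl with h1 | h1 <;> rw [h1] <;> norm_num
  have huval : u = F l * (F x - F l) := by
    rw [hu, hsgn]; linear_combination hFl2
  have habsFl : |F l| = 1 := hFl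
  have hremain : |u - F l * (d * (x - l))| ≤ C * h ^ 2 := by
    rw [huval, ← mul_sub]
    calc |F l * (F x - F l - d * (x - l))| = |F l| * |F x - F l - d * (x - l)| := abs_mul _ _
      _ = |F x - F l - d * (x - l)| := by rw [habsFl, one_mul]
      _ ≤ C * (x - l) ^ 2 := hT
      _ = C * h ^ 2 := by rw [hh, sq_abs]
  have habs_term : |F l * (d * (x - l))| = |d| * h := by
    rw [abs_mul, habsFl, one_mul, abs_mul, hh]
  -- max simplification
  have hmax : max (F x ^ 2 - 1) 0 = u ^ 2 + 2 * u := by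
    have h1 : F x ^ 2 = |F x| ^ 2 := (sq_abs _).symm
    have h2 : F x ^ 2 - 1 = u ^ 2 + 2 * u := by rw [h1, hu]; ring
    rw [h2, max_eq_left (by nlinarith)]
  set a : ℝ := u ^ 2 + 2 * u with ha
  set b : ℝ := 2 * |d| * h with hb
  have ha0 : 0 ≤ a := by nlinarith
  have hb0 : 0 ≤ b := by positivity
  have goal_eq : (|F x| + Real.sqrt (max (F x ^ 2 - 1) 0)) - 1 - Real.sqrt (2 * |d| * |x - l|)
      = u + (Real.sqrt a - Real.sqrt b) := by
    rw [hmax, ha, hb, hh, hu]; ring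
  rw [Real.norm_eq_abs, Real.norm_eq_abs, goal_eq]
  -- core estimate
  have hcore : |u + (Real.sqrt a - Real.sqrt b)| ≤ K * h := by
    rcases le_or_gt 0 (F l * (d * (x - l))) with hcase | hcase
    · -- case A
      have heq : F l * (d * (x - l)) = |d| * h := by
        rw [← habs_term, abs_of_nonneg hcase]
      rw [heq] at hremain
      have h2 : h ^ 2 ≤ h := by nlinarith [hsm, hh0]
      have hch : C * h ^ 2 ≤ C * h := mul_le_mul_of_nonneg_left h2 hC.le
      have hu_le : u ≤ (|d| + C) * h := by
        have h3 := (abs_le.1 hremain).2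
        linarith
      have hab : |a - b| ≤ u ^ 2 + 2 * C * h ^ 2 := by
        have : a - b = u ^ 2 + 2 * (u - |d| * h) := by rw [ha, hb]; ring
        rw [this]
        calc |u ^ 2 + 2 * (u - |d| * h)| ≤ |u ^ 2| + |2 * (u - |d| * h)| := abs_add_le _ _
          _ ≤ u ^ 2 + 2 * C * h ^ 2 := by
              rw [abs_of_nonneg (sq_nonneg u), abs_mul, abs_two]
              linarith [hremain]
      have hsq : |Real.sqrt a - Real.sqrt b| ≤ u + Real.sqrt (2 * C) * h := by
        calc |Real.sqrt a - Real.sqrt b| ≤ Real.sqrt |a - b| :=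
              abs_sqrt_sub_sqrt_le a b ha0 hb0
          _ ≤ Real.sqrt (u ^ 2 + 2 * C * h ^ 2) := Real.sqrt_le_sqrt hab
          _ ≤ Real.sqrt (u ^ 2) + Real.sqrt (2 * C * h ^ 2) :=
              sqrt_add_le' _ _ (sq_nonneg u) (by positivity)
          _ = u + Real.sqrt (2 * C) * h := by
              rw [Real.sqrt_sq hupos.le, show 2 * C * h ^ 2 = (2 * C) * h ^ 2 by ring,
                Real.sqrt_mul (by positivity), Real.sqrt_sq hh0]
      have hM : (2 * (|d| + C) + Real.sqrt (2 * C)) ≤ K := by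
        rw [hK]
        linarith [Real.sqrt_nonneg (C ^ 2 + 2 * C), Real.sqrt_nonneg (2 * C), hC.le]
      calc |u + (Real.sqrt a - Real.sqrt b)| ≤ |u| + |Real.sqrt a - Real.sqrt b| := abs_add_le _ _
        _ ≤ (|d| + C) * h + (u + Real.sqrt (2 * C) * h) := by
            rw [abs_of_pos hupos]; exact add_le_add hu_le hsq
        _ ≤ (2 * (|d| + C) + Real.sqrt (2 * C)) * h := by linarith
        _ ≤ K * h := mul_le_mul_of_nonneg_right hM hh0
    · -- case B
      have hneg : -(F l * (d * (x - l))) = |d| * h := by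
        rw [← habs_term, abs_of_neg hcase]
      have hdh : |d| * h ≤ C * h ^ 2 := by
        have h3 := (abs_le.1 hremain).2
        linarith [hneg, hupos]
      have hu_le : u ≤ C * h ^ 2 := by
        have h3 := (abs_le.1 hremain).2
        linarith [hneg, abs_nonneg d, mul_nonneg (abs_nonneg d) hh0]
      have h2 : h ^ 2 ≤ h := by nlinarith [hsm, hh0]
      have hch : C * h ^ 2 ≤ C * h := mul_le_mul_of_nonneg_left h2 hC.le
      have hu_le' : u ≤ C * h := le_trans hu_le hch
      have hsa : Real.sqrt a ≤ Real.sqrt (C ^ 2 + 2 * C) * h := by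
        have haa : a ≤ (C ^ 2 + 2 * C) * h ^ 2 := by
          rw [ha]
          have hu2 : u * u ≤ (C * h ^ 2) * (C * h ^ 2) :=
            mul_le_mul hu_le hu_le hupos.le (by positivity)
          have h42 : h ^ 4 ≤ h ^ 2 := by nlinarith [hsm, hh0, sq_nonneg h]
          have : C ^ 2 * h ^ 4 ≤ C ^ 2 * h ^ 2 := mul_le_mul_of_nonneg_left h42 (by positivity)
          nlinarith
        calc Real.sqrt a ≤ Real.sqrt ((C ^ 2 + 2 * C) * h ^ 2) := Real.sqrt_le_sqrt haa
          _ = Real.sqrt (C ^ 2 + 2 * C) * h := by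
              rw [Real.sqrt_mul (by positivity), Real.sqrt_sq hh0]
      have hsb : Real.sqrt b ≤ Real.sqrt (2 * C) * h := by
        have hbb : b ≤ (2 * C) * h ^ 2 := by rw [hb]; linarith
        calc Real.sqrt b ≤ Real.sqrt ((2 * C) * h ^ 2) := Real.sqrt_le_sqrt hbb
          _ = Real.sqrt (2 * C) * h := by
              rw [Real.sqrt_mul (by positivity), Real.sqrt_sq hh0]
      have hsa0 : 0 ≤ Real.sqrt a := Real.sqrt_nonneg _
      have hsb0 : 0 ≤ Real.sqrt b := Real.sqrt_nonneg _
      calc |u + (Real.sqrt a - Real.sqrt b)| ≤ |u| + |Real.sqrt a - Real.sqrt b| := abs_add_le _ _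
        _ ≤ C * h + (Real.sqrt (C ^ 2 + 2 * C) * h + Real.sqrt (2 * C) * h) := by
            rw [abs_of_pos hupos]
            refine add_le_add hu_le' ?_
            rw [abs_sub_le_iff]
            constructor <;> linarith
        _ = (C + Real.sqrt (C ^ 2 + 2 * C) + Real.sqrt (2 * C)) * h := by ring
        _ ≤ K * h := by
            refine mul_le_mul_of_nonneg_right ?_ hh0
            rw [hK]
            linarith [Real.sqrt_nonneg (2 * C), abs_nonneg d, hC.le]
  calc |u + (Real.sqrt a - Real.sqrt b)| ≤ K * h := hcore
    _ = K * |h| := by rw [abs_of_nonneg hh0]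
end
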